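/- arXiv:2109.05155 — 4 statements merged into one kernel-verified Lean document; each statement's English description precedes it below -/
import Mathlib

section
/- The propensity score is a balancing score: if p(X) = P(D=1 | X) for binary D, then D ⊥ X | p(X), i.e., P(D=1 | X, p(X)) = P(D=1 | p(X)) = p(X) almost surely. -/
open MeasureTheory ProbabilityTheory Filter

/-- The propensity score is a balancing score: `D ⊥ X | p(X)`, and
`P(D = 1 | p(X)) = p(X)` a.s. -/
theorem propensity_is_balancing
    {Ω : Type*} [MeasurableSpace Ω] [StandardBorelSpace Ω]
    (μ : Measure Ω) [IsProbabilityMeasure μ]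
    {p : ℕ} (X : Ω → (Fin p → ℝ)) (D : Ω → ℝ)
    (hX : Measurable X) (hD : Measurable D)
    (hDbin : ∀ ω, D ω = 0 ∨ D ω = 1)
    (e : Ω → ℝ) (he_meas : Measurable e)
    (he_measX : Measurable[MeasurableSpace.comap X inferInstance] e)
    (he : e =ᵐ[μ] (μ[D | MeasurableSpace.comap X inferInstance])) :
    CondIndepFun (MeasurableSpace.comap e inferInstance) he_meas.comap_le D X μ ∧
      (μ[D | MeasurableSpace.comap e inferInstance]) =ᵐ[μ] e := by
  rename_i mΩ _sb _ipm
  have hm0 := he_meas.comap_le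
  have hmX0 := hX.comap_le
  have hmmX := he_measX.comap_le
  set m : MeasurableSpace Ω := MeasurableSpace.comap e inferInstance with hm_def
  set mX : MeasurableSpace Ω := MeasurableSpace.comap X inferInstance with hmX_def
  -- measurability of e w.r.t. m
  have he_m : Measurable[m] e := fun s hs => ⟨s, hs, rfl⟩
  -- integrability facts
  have hDi : Integrable D μ := by
    refine ⟨hD.aestronglyMeasurable, ?_⟩
    refine HasFiniteIntegral.of_bounded (C := 1) (ae_of_all _ fun ω => ?_)
    rcases hDbin ω with h | h <;> simp [h]
  have hei : Integrable e μ := (integrable_condExp).congr he.symm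
  -- Part 2 : μ[D|m] =ᵐ e
  have h2 : (μ[D|m]) =ᵐ[μ] e := by
    calc μ[D|m] =ᵐ[μ] μ[μ[D|mX]|m] := (condExp_condExp_of_le hmmX hmX0).symm
    _ =ᵐ[μ] μ[e|m] := (condExp_congr_ae he).symm
    _ = e := condExp_of_stronglyMeasurable hm0 he_m.stronglyMeasurable hei
  -- Key pull-out computation
  have key : ∀ B : Set Ω, MeasurableSet[mX] B →
      (μ[fun ω => D ω * B.indicator (fun _ => (1:ℝ)) ω | m]) =ᵐ[μ]
        fun ω => e ω * (μ[B.indicator (fun _ => (1:ℝ)) | m]) ω := by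
    intro B hB
    have hBsm : StronglyMeasurable[mX] (B.indicator (fun _ => (1:ℝ))) :=
      StronglyMeasurable.indicator stronglyMeasurable_const hB
    have hBm : Measurable[mΩ] (B.indicator (fun _ => (1:ℝ))) :=
      (hBsm.measurable.mono hmX0 le_rfl)
    have hBi : Integrable (B.indicator (fun _ => (1:ℝ))) μ := by
      refine ⟨hBm.aestronglyMeasurable, ?_⟩
      refine HasFiniteIntegral.of_bounded (C := 1) (ae_of_all _ fun ω => ?_)
      by_cases hω : ω ∈ B <;> simp [hω]
    have hDBi : Integrable (B.indicator (fun _ => (1:ℝ)) * D) μ := by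
      refine ⟨(hBm.mul hD).aestronglyMeasurable, ?_⟩
      refine HasFiniteIntegral.of_bounded (C := 1) (ae_of_all _ fun ω => ?_)
      rcases hDbin ω with h | h <;> by_cases hω : ω ∈ B <;>
        simp [h, hω, Pi.mul_apply]
    have heBi : Integrable (e * B.indicator (fun _ => (1:ℝ))) μ := by
      refine hei.abs.mono' (he_meas.mul hBm).aestronglyMeasurable
        (ae_of_all _ fun ω => ?_)
      by_cases hω : ω ∈ B <;> simp [hω, abs_nonneg, Pi.mul_apply]
    have step1 : (μ[fun ω => D ω * B.indicator (fun _ => (1:ℝ)) ω|m]) =ᵐ[μ]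
        μ[μ[fun ω => D ω * B.indicator (fun _ => (1:ℝ)) ω|mX]|m] :=
      (condExp_condExp_of_le hmmX hmX0).symm
    have hcomm : (fun ω => D ω * B.indicator (fun _ => (1:ℝ)) ω)
        = B.indicator (fun _ => (1:ℝ)) * D := by
      funext ω; simp [Pi.mul_apply, mul_comm]
    have step2 : (μ[fun ω => D ω * B.indicator (fun _ => (1:ℝ)) ω|mX]) =ᵐ[μ]
        e * B.indicator (fun _ => (1:ℝ)) := by
      rw [hcomm]
      refine (condExp_mul_of_stronglyMeasurable_left hBsm hDBi hDi).trans ?_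
      filter_upwards [he] with ω hω
      simp only [Pi.mul_apply]
      rw [← hω, mul_comm]
    have step3 : (μ[e * B.indicator (fun _ => (1:ℝ))|m]) =ᵐ[μ]
        e * μ[B.indicator (fun _ => (1:ℝ))|m] :=
      condExp_mul_of_stronglyMeasurable_left he_m.stronglyMeasurable heBi hBi
    exact step1.trans (((condExp_congr_ae step2).trans step3))
  refine ⟨?_, h2⟩
  rw [condIndepFun_iff_condExp_inter_preimage_eq_mul hD hX]
  intro s t hs ht
  set B : Set Ω := X ⁻¹' t with hB_def
  have hB : MeasurableSet[mX] B := ⟨t, ht, rfl⟩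
  have hBsm : StronglyMeasurable[mX] (B.indicator (fun _ => (1:ℝ))) :=
    StronglyMeasurable.indicator stronglyMeasurable_const hB
  have hBm : Measurable[mΩ] (B.indicator (fun _ => (1:ℝ))) :=
    (hBsm.measurable.mono hmX0 le_rfl)
  have hBi : Integrable (B.indicator (fun _ => (1:ℝ))) μ := by
    refine ⟨hBm.aestronglyMeasurable, ?_⟩
    refine HasFiniteIntegral.of_bounded (C := 1) (ae_of_all _ fun ω => ?_)
    by_cases hω : ω ∈ B <;> simp [hω]
  have hDBi : Integrable (fun ω => D ω * B.indicator (fun _ => (1:ℝ)) ω) μ := by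
    refine ⟨(hD.mul hBm).aestronglyMeasurable, ?_⟩
    refine HasFiniteIntegral.of_bounded (C := 1) (ae_of_all _ fun ω => ?_)
    rcases hDbin ω with h | h <;> by_cases hω : ω ∈ B <;> simp [h, hω]
  by_cases h1 : (1:ℝ) ∈ s <;> by_cases h0 : (0:ℝ) ∈ s
  · -- both: D ⁻¹' s = univ
    have hA : D ⁻¹' s = Set.univ := by
      ext ω; rcases hDbin ω with h | h <;> simp [Set.mem_preimage, h, h0, h1]
    rw [hA, Set.univ_inter]
    have : (μ⟦(Set.univ : Set Ω)|m⟧) = fun _ => (1:ℝ) := by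
      rw [Set.indicator_univ, condExp_const hm0 (1:ℝ)]
    rw [this]
    filter_upwards with ω
    simp
  · -- only 1 ∈ s : indicator = D
    have hA : (D ⁻¹' s).indicator (fun _ => (1:ℝ)) = D := by
      funext ω; rcases hDbin ω with h | h <;>
        simp [Set.indicator_apply, Set.mem_preimage, h, h0, h1]
    have hAB : ((D ⁻¹' s ∩ B)).indicator (fun _ => (1:ℝ))
        = fun ω => D ω * B.indicator (fun _ => (1:ℝ)) ω := by
      funext ω
      by_cases hω : ω ∈ B
      · rcases hDbin ω with h | h <;>
          simp [Set.indicator_apply, Set.mem_inter_iff, Set.mem_preimage, h, h0, h1, hω]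
      · simp [Set.indicator_apply, Set.mem_inter_iff, hω]
    show (μ[((D ⁻¹' s ∩ B)).indicator (fun _ => (1:ℝ))|m]) =ᵐ[μ] _
    rw [hAB]
    refine (key B hB).trans ?_
    have : (μ[(D ⁻¹' s).indicator (fun _ => (1:ℝ))|m]) = μ[D|m] := by rw [hA]
    rw [this]
    filter_upwards [h2] with ω hω
    rw [hω]
  · -- only 0 ∈ s : indicator = 1 - D
    have hA : (D ⁻¹' s).indicator (fun _ => (1:ℝ)) = (fun _ => (1:ℝ)) - D := by
      funext ω; rcases hDbin ω with h | h <;>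
        simp [Set.indicator_apply, Set.mem_preimage, h, h0, h1]
    have hAB : ((D ⁻¹' s ∩ B)).indicator (fun _ => (1:ℝ))
        = B.indicator (fun _ => (1:ℝ)) - fun ω => D ω * B.indicator (fun _ => (1:ℝ)) ω := by
      funext ω
      by_cases hω : ω ∈ B
      · rcases hDbin ω with h | h <;>
          simp [Set.indicator_apply, Set.mem_inter_iff, Set.mem_preimage, h, h0, h1, hω]
      · simp [Set.indicator_apply, Set.mem_inter_iff, hω]
    show (μ[((D ⁻¹' s ∩ B)).indicator (fun _ => (1:ℝ))|m]) =ᵐ[μ] _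
    rw [hAB, hA]
    have e1 := condExp_sub (m := m) hBi hDBi
    have e2 := condExp_sub (m := m) (integrable_const (1:ℝ)) hDi
    have e3 : (μ[fun _ => (1:ℝ)|m]) = fun _ => (1:ℝ) := condExp_const hm0 (1:ℝ)
    filter_upwards [e1, e2, key B hB, h2] with ω he1 he2 hkey hh2
    have he2' : (μ[(fun _ => (1:ℝ)) - D|m]) ω = 1 - e ω := by
      rw [he2, Pi.sub_apply, e3, hh2]
    rw [he1, he2', Pi.sub_apply, hkey]
    ring
  · -- neither: D ⁻¹' s = ∅
    have hA : D ⁻¹' s = ∅ := by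
      ext ω; rcases hDbin ω with h | h <;> simp [Set.mem_preimage, h, h0, h1]
    rw [hA, Set.empty_inter]
    have hz : (μ⟦(∅ : Set Ω)|m⟧) = fun _ => (0:ℝ) := by
      rw [Set.indicator_empty]
      exact condExp_zero
    rw [hz]
    filter_upwards with ω
    simp
end

section
/- If unconfoundedness (Y^T, Y^C) ⊥ D | X holds and p(X) = P(D=1|X), then unconfoundedness given the propensity score holds: (Y^T, Y^C) ⊥ D | p(X). -/
open MeasureTheory ProbabilityTheory Filter

/-- Unconfoundedness given `X` implies unconfoundedness given the propensity
score `p(X)`. -/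
theorem unconfoundedness_given_propensity
    {Ω : Type*} [MeasurableSpace Ω] [StandardBorelSpace Ω]
    (μ : Measure Ω) [IsProbabilityMeasure μ]
    {p : ℕ} (X : Ω → (Fin p → ℝ)) (D YT YC : Ω → ℝ)
    (hX : Measurable X) (hD : Measurable D) (hYT : Measurable YT) (hYC : Measurable YC)
    (hDbin : ∀ ω, D ω = 0 ∨ D ω = 1)
    (e : Ω → ℝ) (he_meas : Measurable e)
    (he_measX : Measurable[MeasurableSpace.comap X inferInstance] e)
    (he : e =ᵐ[μ] (μ[D | MeasurableSpace.comap X inferInstance]))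
    (huncf : CondIndepFun (MeasurableSpace.comap X inferInstance) hX.comap_le
      (fun ω => (YT ω, YC ω)) D μ) :
    CondIndepFun (MeasurableSpace.comap e inferInstance) he_meas.comap_le
      (fun ω => (YT ω, YC ω)) D μ := by
  have hm : MeasurableSpace.comap e inferInstance ≤ ‹MeasurableSpace Ω› := he_meas.comap_le
  have hmX : MeasurableSpace.comap X inferInstance ≤ ‹MeasurableSpace Ω› := hX.comap_le
  have hm_le : MeasurableSpace.comap e inferInstance ≤ MeasurableSpace.comap X inferInstance :=
    he_measX.comap_le
  set Y : Ω → ℝ × ℝ := fun ω => (YT ω, YC ω) with hYdef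
  have hY : Measurable Y := hYT.prodMk hYC
  have he_m : StronglyMeasurable[MeasurableSpace.comap e inferInstance] e :=
    (Measurable.stronglyMeasurable (measurable_iff_comap_le.mpr le_rfl))
  have hD_int : Integrable D μ := by
    refine (integrable_const (1:ℝ)).mono' hD.aestronglyMeasurable ?_
    filter_upwards with ω
    rcases hDbin ω with h | h <;> simp [h]
  have he_int : Integrable e μ := integrable_condExp.congr he.symm
  have he_bdd : ∀ᵐ ω ∂μ, |e ω| ≤ 1 := by
    have h1 : ∀ᵐ ω ∂μ, |D ω| ≤ ((1 : NNReal) : ℝ) := by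
      filter_upwards with ω
      rcases hDbin ω with h | h <;> simp [h]
    filter_upwards [he, ae_bdd_condExp_of_ae_bdd
      (m := MeasurableSpace.comap X inferInstance) h1] with ω hω h2
    rw [hω]; exact_mod_cast h2
  set B : Set Ω := D ⁻¹' {1} with hBdef
  have hB : MeasurableSet B := hD (measurableSet_singleton 1)
  have hindD : B.indicator (fun _ => (1:ℝ)) = D := by
    funext ω
    rcases hDbin ω with h | h <;>
      simp [hBdef, Set.indicator_apply, Set.mem_preimage, Set.mem_singleton_iff, h]
  -- E[D | σ(e)] = e
  have key2 : (μ⟦B | MeasurableSpace.comap e inferInstance⟧) =ᵐ[μ] e := by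
    have tow : μ[μ[D | MeasurableSpace.comap X inferInstance] |
        MeasurableSpace.comap e inferInstance] =ᵐ[μ]
        μ[D | MeasurableSpace.comap e inferInstance] := condExp_condExp_of_le hm_le hmX
    have hDm : μ[D | MeasurableSpace.comap e inferInstance] =ᵐ[μ] e := by
      calc μ[D | MeasurableSpace.comap e inferInstance]
          =ᵐ[μ] μ[μ[D | MeasurableSpace.comap X inferInstance] |
            MeasurableSpace.comap e inferInstance] := tow.symm
        _ =ᵐ[μ] μ[e | MeasurableSpace.comap e inferInstance] := condExp_congr_ae he.symm
        _ = e := condExp_of_stronglyMeasurable hm he_m he_int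
    have hrw : (μ⟦B | MeasurableSpace.comap e inferInstance⟧)
        = μ[D | MeasurableSpace.comap e inferInstance] := by rw [hindD]
    rw [hrw]; exact hDm
  have condDmX : (μ⟦B | MeasurableSpace.comap X inferInstance⟧) =ᵐ[μ] e := by
    have hrw : (μ⟦B | MeasurableSpace.comap X inferInstance⟧)
        = μ[D | MeasurableSpace.comap X inferInstance] := by rw [hindD]
    rw [hrw]; exact he.symm
  have hmul := (condIndepFun_iff_condExp_inter_preimage_eq_mul
      (f := Y) (g := D) hY hD).mp huncf
  -- the key computation for B = {D = 1}
  have key1 : ∀ s : Set (ℝ × ℝ), MeasurableSet s →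
      (μ⟦Y ⁻¹' s ∩ B | MeasurableSpace.comap e inferInstance⟧) =ᵐ[μ]
        fun ω => (μ⟦Y ⁻¹' s | MeasurableSpace.comap e inferInstance⟧) ω * e ω := by
    intro s hs
    have step1 : (μ⟦Y ⁻¹' s ∩ B | MeasurableSpace.comap X inferInstance⟧) =ᵐ[μ]
        e * (μ⟦Y ⁻¹' s | MeasurableSpace.comap X inferInstance⟧) := by
      filter_upwards [hmul s {1} hs (measurableSet_singleton 1), condDmX] with ω h1 h2
      rw [h1, h2, mul_comm]
      rfl
    have hint_mul : Integrable (e * (μ⟦Y ⁻¹' s | MeasurableSpace.comap X inferInstance⟧)) μ := by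
      have hgi : Integrable
          (fun ω => |(μ⟦Y ⁻¹' s | MeasurableSpace.comap X inferInstance⟧) ω|) μ :=
        (integrable_condExp (f := (Y ⁻¹' s).indicator fun _ => (1:ℝ))
          (m := MeasurableSpace.comap X inferInstance)).abs
      refine hgi.mono'
        (he_meas.aestronglyMeasurable.mul
          (stronglyMeasurable_condExp.mono hmX).aestronglyMeasurable) ?_
      filter_upwards [he_bdd] with ω hb
      have hh : ‖(e * (μ⟦Y ⁻¹' s | MeasurableSpace.comap X inferInstance⟧)) ω‖
          = |e ω| * |(μ⟦Y ⁻¹' s | MeasurableSpace.comap X inferInstance⟧) ω| := by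
        simp [Pi.mul_apply, Real.norm_eq_abs, abs_mul]
      rw [hh]
      calc |e ω| * |(μ⟦Y ⁻¹' s | MeasurableSpace.comap X inferInstance⟧) ω|
          ≤ 1 * |(μ⟦Y ⁻¹' s | MeasurableSpace.comap X inferInstance⟧) ω| := by gcongr
        _ = |(μ⟦Y ⁻¹' s | MeasurableSpace.comap X inferInstance⟧) ω| := one_mul _
    have step2 : μ[e * (μ⟦Y ⁻¹' s | MeasurableSpace.comap X inferInstance⟧) |
          MeasurableSpace.comap e inferInstance] =ᵐ[μ]
        e * μ[(μ⟦Y ⁻¹' s | MeasurableSpace.comap X inferInstance⟧) |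
          MeasurableSpace.comap e inferInstance] :=
      condExp_mul_of_stronglyMeasurable_left he_m hint_mul integrable_condExp
    have towAB : μ[(μ⟦Y ⁻¹' s ∩ B | MeasurableSpace.comap X inferInstance⟧) |
          MeasurableSpace.comap e inferInstance] =ᵐ[μ]
        (μ⟦Y ⁻¹' s ∩ B | MeasurableSpace.comap e inferInstance⟧) :=
      condExp_condExp_of_le hm_le hmX
    have towA : μ[(μ⟦Y ⁻¹' s | MeasurableSpace.comap X inferInstance⟧) |
          MeasurableSpace.comap e inferInstance] =ᵐ[μ]
        (μ⟦Y ⁻¹' s | MeasurableSpace.comap e inferInstance⟧) :=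
      condExp_condExp_of_le hm_le hmX
    calc (μ⟦Y ⁻¹' s ∩ B | MeasurableSpace.comap e inferInstance⟧)
        =ᵐ[μ] μ[(μ⟦Y ⁻¹' s ∩ B | MeasurableSpace.comap X inferInstance⟧) |
          MeasurableSpace.comap e inferInstance] := towAB.symm
      _ =ᵐ[μ] μ[e * (μ⟦Y ⁻¹' s | MeasurableSpace.comap X inferInstance⟧) |
          MeasurableSpace.comap e inferInstance] := condExp_congr_ae step1
      _ =ᵐ[μ] e * μ[(μ⟦Y ⁻¹' s | MeasurableSpace.comap X inferInstance⟧) |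
          MeasurableSpace.comap e inferInstance] := step2
      _ =ᵐ[μ] fun ω => (μ⟦Y ⁻¹' s | MeasurableSpace.comap e inferInstance⟧) ω * e ω := by
          filter_upwards [towA] with ω hω
          rw [Pi.mul_apply, hω, mul_comm]
  -- conclude
  rw [condIndepFun_iff_condExp_inter_preimage_eq_mul (f := Y) (g := D) hY hD]
  intro s t hs ht
  have hA : MeasurableSet (Y ⁻¹' s) := hY hs
  have hAint : Integrable ((Y ⁻¹' s).indicator fun _ => (1:ℝ)) μ :=
    (integrable_const 1).indicator hA
  have hABint : Integrable ((Y ⁻¹' s ∩ B).indicator fun _ => (1:ℝ)) μ :=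
    (integrable_const 1).indicator (hA.inter hB)
  by_cases h0 : (0:ℝ) ∈ t <;> by_cases h1 : (1:ℝ) ∈ t
  · -- D ⁻¹' t = univ
    have htu : D ⁻¹' t = Set.univ := Set.eq_univ_of_forall fun ω => by
      rcases hDbin ω with h | h <;> simp [Set.mem_preimage, h, h0, h1]
    rw [htu, Set.inter_univ]
    have hcu : (μ⟦(Set.univ : Set Ω) | MeasurableSpace.comap e inferInstance⟧)
        = fun _ => (1:ℝ) := by
      rw [Set.indicator_univ]
      exact condExp_const hm 1
    rw [hcu]
    filter_upwards with ω
    simp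
  · -- 0 ∈ t, 1 ∉ t : D ⁻¹' t = Bᶜ
    have htc : D ⁻¹' t = Bᶜ := Set.ext fun ω => by
      rcases hDbin ω with h | h <;>
        simp [hBdef, Set.mem_preimage, Set.mem_singleton_iff, h, h0, h1]
    rw [htc]
    have hsub : (Y ⁻¹' s ∩ Bᶜ).indicator (fun _ => (1:ℝ))
        = (Y ⁻¹' s).indicator (fun _ => (1:ℝ)) - (Y ⁻¹' s ∩ B).indicator (fun _ => (1:ℝ)) := by
      funext ω
      by_cases hAw : ω ∈ Y ⁻¹' s <;> by_cases hBw : ω ∈ B <;>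
        simp [Set.indicator_apply, hAw, hBw]
    have hcsub : (Bᶜ).indicator (fun _ => (1:ℝ))
        = (fun _ => (1:ℝ)) - B.indicator (fun _ => (1:ℝ)) := by
      funext ω
      by_cases hBw : ω ∈ B <;> simp [Set.indicator_apply, hBw]
    have hBc : (μ⟦Bᶜ | MeasurableSpace.comap e inferInstance⟧) =ᵐ[μ] fun ω => 1 - e ω := by
      have hrw : (μ⟦Bᶜ | MeasurableSpace.comap e inferInstance⟧)
          = μ[(fun _ => (1:ℝ)) - B.indicator (fun _ => (1:ℝ)) |
            MeasurableSpace.comap e inferInstance] := by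
        rw [hcsub]
      rw [hrw]
      have hsubc := condExp_sub (μ := μ) (m := MeasurableSpace.comap e inferInstance)
        (integrable_const (1:ℝ)) ((integrable_const 1).indicator hB)
      filter_upwards [hsubc, key2] with ω hω h2
      rw [hω, Pi.sub_apply, condExp_const hm, h2]
    have hABc : (μ⟦Y ⁻¹' s ∩ Bᶜ | MeasurableSpace.comap e inferInstance⟧) =ᵐ[μ]
        fun ω => (μ⟦Y ⁻¹' s | MeasurableSpace.comap e inferInstance⟧) ω * (1 - e ω) := by
      have hrw : (μ⟦Y ⁻¹' s ∩ Bᶜ | MeasurableSpace.comap e inferInstance⟧)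
          = μ[(Y ⁻¹' s).indicator (fun _ => (1:ℝ)) - (Y ⁻¹' s ∩ B).indicator (fun _ => (1:ℝ)) |
            MeasurableSpace.comap e inferInstance] := by
        rw [hsub]
      rw [hrw]
      filter_upwards [condExp_sub (m := MeasurableSpace.comap e inferInstance) hAint hABint, key1 s hs] with ω hω h2
      rw [hω, Pi.sub_apply, h2]
      ring
    filter_upwards [hABc, hBc] with ω hω h2
    rw [hω, h2]
  · -- 0 ∉ t, 1 ∈ t : D ⁻¹' t = B
    have htB : D ⁻¹' t = B := Set.ext fun ω => by
      rcases hDbin ω with h | h <;>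
        simp [hBdef, Set.mem_preimage, Set.mem_singleton_iff, h, h0, h1]
    rw [htB]
    filter_upwards [key1 s hs, key2] with ω hω h2
    rw [hω, h2]
  · -- D ⁻¹' t = ∅
    have hte : D ⁻¹' t = ∅ := Set.eq_empty_of_forall_notMem fun ω hω => by
      rcases hDbin ω with h | h <;> rw [Set.mem_preimage, h] at hω <;> contradiction
    rw [hte, Set.inter_empty]
    have hce : (μ⟦(∅ : Set Ω) | MeasurableSpace.comap e inferInstance⟧) = fun _ => (0:ℝ) := by
      rw [Set.indicator_empty]
      simpa using condExp_const hm (0:ℝ)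
    rw [hce]
    filter_upwards with ω
    simp
end

section
/- Let b be a measurable function of X such that D ⊥ X | b(X). If (Y^T, Y^C) ⊥ D | X, then (Y^T, Y^C) ⊥ D | b(X). That is, every balancing score preserves unconfoundedness. -/
open MeasureTheory ProbabilityTheory Filter

private lemma integral_mul_indicator_one {Ω : Type*} [MeasurableSpace Ω] (μ : Measure Ω)
    {s : Set Ω} (hs : MeasurableSet s) (f : Ω → ℝ) :
    ∫ x, f x * Set.indicator s (fun _ => (1:ℝ)) x ∂μ = ∫ x in s, f x ∂μ := by
  rw [← integral_indicator hs]
  congr 1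
  funext x
  by_cases hx : x ∈ s <;> simp [hx]

/-- The core argument, stated abstractly for two σ-algebras `mG ≤ mF`. -/
private lemma balancing_key {Ω : Type*} {mG mF : MeasurableSpace Ω} [mΩ : MeasurableSpace Ω]
    (μ : Measure Ω) [IsProbabilityMeasure μ]
    (hGF : mG ≤ mF) (hF : mF ≤ mΩ) (hG : mG ≤ mΩ)
    {Y : Ω → ℝ × ℝ} {D : Ω → ℝ} (hY : Measurable Y) (hD : Measurable D)
    (hDbin : ∀ ω, D ω = 0 ∨ D ω = 1)
    (hbal2 : ∀ s : Set Ω, MeasurableSet[mF] s →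
      (μ⟦D ⁻¹' {1} ∩ s | mG⟧) =ᵐ[μ] fun ω => (μ⟦D ⁻¹' {1} | mG⟧) ω * (μ⟦s | mG⟧) ω)
    (huncf2 : ∀ s : Set (ℝ × ℝ), MeasurableSet s →
      (μ⟦Y ⁻¹' s ∩ D ⁻¹' {1} | mF⟧) =ᵐ[μ]
        fun ω => (μ⟦Y ⁻¹' s | mF⟧) ω * (μ⟦D ⁻¹' {1} | mF⟧) ω) :
    ∀ s t : _, MeasurableSet s → MeasurableSet t →
      (μ⟦Y ⁻¹' s ∩ D ⁻¹' t | mG⟧) =ᵐ[μ]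
        fun ω => (μ⟦Y ⁻¹' s | mG⟧) ω * (μ⟦D ⁻¹' t | mG⟧) ω := by
  classical
  have hsD : MeasurableSet (D ⁻¹' {(1:ℝ)}) := hD (measurableSet_singleton 1)
  -- D is (pointwise) the indicator of {D = 1}
  have hDi : ∀ ω, D ω = Set.indicator (D ⁻¹' {(1:ℝ)}) (fun _ => (1:ℝ)) ω := by
    intro ω
    rcases hDbin ω with h | h <;>
      simp [Set.indicator_apply, Set.mem_preimage, h]
  -- integrability facts
  have hDbd : ∀ ω, ‖D ω‖ ≤ (1:ℝ) := by
    intro ω; rcases hDbin ω with h | h <;> simp [h]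
  have hDint : Integrable D μ :=
    (integrable_const (1:ℝ)).mono' (hD.aestronglyMeasurable (μ := μ)) (ae_of_all _ hDbd)
  have hindint : ∀ s : Set Ω, MeasurableSet s →
      Integrable (Set.indicator s fun _ => (1:ℝ)) μ :=
    fun s hs => (integrable_const (1:ℝ)).indicator hs
  have hDG : (μ[D | mG]) =ᵐ[μ] (μ⟦D ⁻¹' {(1:ℝ)} | mG⟧) :=
    condExp_congr_ae (ae_of_all _ hDi)
  have hDF : (μ[D | mF]) =ᵐ[μ] (μ⟦D ⁻¹' {(1:ℝ)} | mF⟧) :=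
    condExp_congr_ae (ae_of_all _ hDi)
  -- bound on the conditional expectation of D given mG
  have hDGbd : ∀ᵐ x ∂μ, ‖(μ[D | mG]) x‖ ≤ (1:ℝ) := by
    have h := ae_bdd_condExp_of_ae_bdd (μ := μ) (m := mG) (R := 1) (f := D)
      (ae_of_all _ fun ω => by simpa [Real.norm_eq_abs] using hDbd ω)
    filter_upwards [h] with x hx
    simpa [Real.norm_eq_abs] using hx
  -- bound for the conditional indicator
  have hIbd : ∀ (A : Set Ω), ∀ᵐ x ∂μ, ‖(μ⟦A | mG⟧) x‖ ≤ (1:ℝ) := by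
    intro A
    have h := ae_bdd_condExp_of_ae_bdd (μ := μ) (m := mG) (R := 1)
      (f := Set.indicator A fun _ => (1:ℝ))
      (ae_of_all _ fun x => by by_cases h : x ∈ A <;> simp [h])
    filter_upwards [h] with x hx
    simpa [Real.norm_eq_abs] using hx
  have hIFbd : ∀ (A : Set Ω), ∀ᵐ x ∂μ, ‖(μ⟦A | mF⟧) x‖ ≤ (1:ℝ) := by
    intro A
    have h := ae_bdd_condExp_of_ae_bdd (μ := μ) (m := mF) (R := 1)
      (f := Set.indicator A fun _ => (1:ℝ))
      (ae_of_all _ fun x => by by_cases h : x ∈ A <;> simp [h])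
    filter_upwards [h] with x hx
    simpa [Real.norm_eq_abs] using hx
  -- integrability of a bounded a.e.-strongly-measurable function times an indicator
  have hbddint : ∀ (f : Ω → ℝ), AEStronglyMeasurable f μ → (∀ᵐ x ∂μ, ‖f x‖ ≤ (1:ℝ)) →
      ∀ (g : Ω → ℝ), AEStronglyMeasurable g μ → (∀ᵐ x ∂μ, ‖g x‖ ≤ (1:ℝ)) →
      Integrable (fun x => f x * g x) μ := by
    intro f hf hfb g hg hgb
    refine (integrable_const (1:ℝ)).mono' (hf.mul hg) ?_
    filter_upwards [hfb, hgb] with x h1 h2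
    calc ‖f x * g x‖ = ‖f x‖ * ‖g x‖ := norm_mul _ _
      _ ≤ 1 * 1 := mul_le_mul h1 h2 (norm_nonneg _) zero_le_one
      _ = 1 := one_mul 1
  have hindbd : ∀ (A : Set Ω), ∀ x, ‖Set.indicator A (fun _ => (1:ℝ)) x‖ ≤ 1 := by
    intro A x; by_cases h : x ∈ A <;> simp [h]
  -- Step 1: E[D | mF] = E[D | mG] a.e. (the balancing score property)
  have h2 : (μ[D | mF]) =ᵐ[μ] (μ[D | mG]) := by
    refine (ae_eq_condExp_of_forall_setIntegral_eq hF hDint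
      (fun s _ _ => integrable_condExp.integrableOn) ?_
      (StronglyMeasurable.aestronglyMeasurable (stronglyMeasurable_condExp.mono hGF))).symm
    intro s hs _
    have hsΩ : MeasurableSet s := hF s hs
    have hmulint : Integrable
        (fun x => (μ⟦D ⁻¹' {(1:ℝ)} | mG⟧) x * Set.indicator s (fun _ => (1:ℝ)) x) μ :=
      hbddint _ (stronglyMeasurable_condExp.mono hG).aestronglyMeasurable (hIbd _)
        _ (stronglyMeasurable_const.indicator hsΩ).aestronglyMeasurable
        (ae_of_all _ (hindbd s))
    have hpull : (μ[(fun x => (μ⟦D ⁻¹' {(1:ℝ)} | mG⟧) x *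
          Set.indicator s (fun _ => (1:ℝ)) x) | mG]) =ᵐ[μ]
        fun x => (μ⟦D ⁻¹' {(1:ℝ)} | mG⟧) x * (μ⟦s | mG⟧) x :=
      condExp_stronglyMeasurable_mul_of_bound hG stronglyMeasurable_condExp
        (hindint s hsΩ) 1 (hIbd _)
    calc ∫ x in s, (μ[D | mG]) x ∂μ
        = ∫ x in s, (μ⟦D ⁻¹' {(1:ℝ)} | mG⟧) x ∂μ :=
          integral_congr_ae (ae_restrict_of_ae hDG)
      _ = ∫ x, (μ⟦D ⁻¹' {(1:ℝ)} | mG⟧) x * Set.indicator s (fun _ => (1:ℝ)) x ∂μ :=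
          (integral_mul_indicator_one μ hsΩ _).symm
      _ = ∫ x, (μ[(fun x => (μ⟦D ⁻¹' {(1:ℝ)} | mG⟧) x *
            Set.indicator s (fun _ => (1:ℝ)) x) | mG]) x ∂μ :=
          (integral_condExp hG).symm
      _ = ∫ x, (μ⟦D ⁻¹' {(1:ℝ)} | mG⟧) x * (μ⟦s | mG⟧) x ∂μ := integral_congr_ae hpull
      _ = ∫ x, (μ⟦D ⁻¹' {(1:ℝ)} ∩ s | mG⟧) x ∂μ :=
          (integral_congr_ae (hbal2 s hs)).symm
      _ = ∫ x, Set.indicator (D ⁻¹' {(1:ℝ)} ∩ s) (fun _ => (1:ℝ)) x ∂μ :=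
          integral_condExp hG
      _ = (μ (D ⁻¹' {(1:ℝ)} ∩ s)).toReal := by
          rw [integral_indicator (hsD.inter hsΩ)]
          simp
          rfl
      _ = ∫ x in s, D x ∂μ := by
          rw [show D ⁻¹' {(1:ℝ)} ∩ s = s ∩ D ⁻¹' {(1:ℝ)} from Set.inter_comm _ _]
          rw [setIntegral_congr_fun hsΩ (fun x _ => hDi x), setIntegral_indicator hsD]
          simp
          rfl
  -- Step 2: key product identity at the level of mG
  have hstar : ∀ s : Set (ℝ × ℝ), MeasurableSet s →
      (μ[(fun ω => Set.indicator (Y ⁻¹' s) (fun _ => (1:ℝ)) ω * D ω) | mG]) =ᵐ[μ]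
        fun ω => (μ⟦Y ⁻¹' s | mG⟧) ω * (μ[D | mG]) ω := by
    intro s hs
    have hA : MeasurableSet (Y ⁻¹' s) := hY hs
    have hADint : Integrable (fun ω => Set.indicator (Y ⁻¹' s) (fun _ => (1:ℝ)) ω * D ω) μ :=
      hbddint _ (stronglyMeasurable_const.indicator hA).aestronglyMeasurable
        (ae_of_all _ (hindbd _)) _ hD.aestronglyMeasurable (ae_of_all _ hDbd)
    -- inner conditional expectation given mF
    have hinner : (μ[(fun ω => Set.indicator (Y ⁻¹' s) (fun _ => (1:ℝ)) ω * D ω) | mF]) =ᵐ[μ]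
        fun ω => (μ[D | mG]) ω * (μ⟦Y ⁻¹' s | mF⟧) ω := by
      have e1 : (fun ω => Set.indicator (Y ⁻¹' s) (fun _ => (1:ℝ)) ω * D ω)
          = Set.indicator (Y ⁻¹' s ∩ D ⁻¹' {(1:ℝ)}) (fun _ => (1:ℝ)) := by
        funext ω
        rw [hDi ω]
        by_cases h1 : ω ∈ Y ⁻¹' s <;> by_cases h2 : ω ∈ D ⁻¹' {(1:ℝ)} <;>
          simp [Set.indicator_apply, h1, h2]
      rw [e1]
      refine (huncf2 s hs).trans ?_
      filter_upwards [hDF, h2] with ω e2 e3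
      rw [← e2, ← e3, mul_comm]
    -- push through the conditional expectation given mG
    calc (μ[(fun ω => Set.indicator (Y ⁻¹' s) (fun _ => (1:ℝ)) ω * D ω) | mG])
        =ᵐ[μ] (μ[(μ[(fun ω => Set.indicator (Y ⁻¹' s) (fun _ => (1:ℝ)) ω * D ω) | mF]) | mG]) :=
          (condExp_condExp_of_le hGF hF).symm
      _ =ᵐ[μ] (μ[(fun ω => (μ[D | mG]) ω * (μ⟦Y ⁻¹' s | mF⟧) ω) | mG]) :=
          condExp_congr_ae hinner
      _ =ᵐ[μ] fun ω => (μ[D | mG]) ω * (μ[(μ⟦Y ⁻¹' s | mF⟧) | mG]) ω :=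
          condExp_stronglyMeasurable_mul_of_bound hG stronglyMeasurable_condExp
            integrable_condExp 1 hDGbd
      _ =ᵐ[μ] fun ω => (μ⟦Y ⁻¹' s | mG⟧) ω * (μ[D | mG]) ω := by
          have := condExp_condExp_of_le hGF hF
            (f := Set.indicator (Y ⁻¹' s) fun _ => (1:ℝ)) (μ := μ)
          filter_upwards [this] with ω hω
          rw [hω, mul_comm]
  -- Conclusion
  intro s t hs ht
  have hA : MeasurableSet (Y ⁻¹' s) := hY hs
  obtain ⟨c0, c1, hDt⟩ : ∃ c0 c1 : ℝ,
      ∀ ω, Set.indicator (D ⁻¹' t) (fun _ => (1:ℝ)) ω = c0 + (c1 - c0) * D ω := by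
    refine ⟨if (0:ℝ) ∈ t then 1 else 0, if (1:ℝ) ∈ t then 1 else 0, fun ω => ?_⟩
    rcases hDbin ω with h | h <;> by_cases h0 : (0:ℝ) ∈ t <;> by_cases h1 : (1:ℝ) ∈ t <;>
      simp [Set.indicator_apply, Set.mem_preimage, h, h0, h1]
  have hYDt : ∀ ω, Set.indicator (Y ⁻¹' s ∩ D ⁻¹' t) (fun _ => (1:ℝ)) ω
      = c0 * Set.indicator (Y ⁻¹' s) (fun _ => (1:ℝ)) ω
        + (c1 - c0) * (Set.indicator (Y ⁻¹' s) (fun _ => (1:ℝ)) ω * D ω) := by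
    intro ω
    by_cases h1 : ω ∈ Y ⁻¹' s
    · have : Set.indicator (Y ⁻¹' s ∩ D ⁻¹' t) (fun _ => (1:ℝ)) ω
          = Set.indicator (D ⁻¹' t) (fun _ => (1:ℝ)) ω := by
        by_cases h2 : ω ∈ D ⁻¹' t <;> simp [Set.indicator_apply, h1, h2]
      rw [this, hDt ω]
      simp [Set.indicator_apply, h1]
    · have h3 : ω ∉ Y ⁻¹' s ∩ D ⁻¹' t := fun h => h1 h.1
      simp [Set.indicator_apply, h1, h3]
  have hADint : Integrable (fun ω => Set.indicator (Y ⁻¹' s) (fun _ => (1:ℝ)) ω * D ω) μ :=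
    hbddint _ (stronglyMeasurable_const.indicator hA).aestronglyMeasurable
      (ae_of_all _ (hindbd _)) _ hD.aestronglyMeasurable (ae_of_all _ hDbd)
  -- expand the left-hand side
  have hLHS : (μ⟦Y ⁻¹' s ∩ D ⁻¹' t | mG⟧) =ᵐ[μ]
      fun ω => c0 * (μ⟦Y ⁻¹' s | mG⟧) ω
        + (c1 - c0) * ((μ⟦Y ⁻¹' s | mG⟧) ω * (μ[D | mG]) ω) := by
    have e1 : (μ⟦Y ⁻¹' s ∩ D ⁻¹' t | mG⟧) =ᵐ[μ]
        (μ[(fun ω => c0 * Set.indicator (Y ⁻¹' s) (fun _ => (1:ℝ)) ω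
          + (c1 - c0) * (Set.indicator (Y ⁻¹' s) (fun _ => (1:ℝ)) ω * D ω)) | mG]) :=
      condExp_congr_ae (ae_of_all _ hYDt)
    have e2 := condExp_add (μ := μ) (m := mG)
      ((hindint _ hA).const_mul c0) (hADint.const_mul (c1 - c0))
    have e3 := condExp_smul (μ := μ) (m := mG) c0 (Set.indicator (Y ⁻¹' s) fun _ => (1:ℝ))
    have e4 := condExp_smul (μ := μ) (m := mG) (c1 - c0)
      (fun ω => Set.indicator (Y ⁻¹' s) (fun _ => (1:ℝ)) ω * D ω)
    refine e1.trans ?_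
    have e5 : (fun ω => c0 * Set.indicator (Y ⁻¹' s) (fun _ => (1:ℝ)) ω
          + (c1 - c0) * (Set.indicator (Y ⁻¹' s) (fun _ => (1:ℝ)) ω * D ω))
        = (c0 • (Set.indicator (Y ⁻¹' s) fun _ => (1:ℝ))
          + (c1 - c0) • fun ω => Set.indicator (Y ⁻¹' s) (fun _ => (1:ℝ)) ω * D ω) := by
      funext ω; simp [smul_eq_mul]
    rw [e5]
    refine (e2.trans ?_)
    filter_upwards [e3, e4, hstar s hs] with ω f3 f4 f5
    simp only [Pi.add_apply, Pi.smul_apply, smul_eq_mul] at *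
    have g3 : (μ[(fun x => c0 * Set.indicator (Y ⁻¹' s) (fun _ => (1:ℝ)) x) | mG]) ω
        = c0 * (μ[(Set.indicator (Y ⁻¹' s) fun _ => (1:ℝ)) | mG]) ω := f3
    have g4 : (μ[(fun x => (c1 - c0) * (Set.indicator (Y ⁻¹' s) (fun _ => (1:ℝ)) x * D x)) | mG]) ω
        = (c1 - c0) * (μ[(fun ω => Set.indicator (Y ⁻¹' s) (fun _ => (1:ℝ)) ω * D ω) | mG]) ω := f4
    rw [g3, g4, f5]
  -- expand the right-hand side
  have hRHS : (μ⟦D ⁻¹' t | mG⟧) =ᵐ[μ] fun ω => c0 + (c1 - c0) * (μ[D | mG]) ω := by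
    have e1 : (μ⟦D ⁻¹' t | mG⟧) =ᵐ[μ]
        (μ[(fun ω => c0 + (c1 - c0) * D ω) | mG]) := condExp_congr_ae (ae_of_all _ hDt)
    have e2 := condExp_add (μ := μ) (m := mG) (integrable_const c0)
      (hDint.const_mul (c1 - c0))
    have e3 := condExp_smul (μ := μ) (m := mG) (c1 - c0) D
    have e4 : (fun ω => c0 + (c1 - c0) * D ω)
        = ((fun _ => c0) + (c1 - c0) • D) := by funext ω; simp [smul_eq_mul]
    refine e1.trans ?_
    rw [e4]
    refine e2.trans ?_
    have e5 := condExp_const hG c0 (μ := μ)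
    filter_upwards [e3] with ω f3
    simp only [Pi.add_apply, Pi.smul_apply, smul_eq_mul, e5] at *
    have g3 : (μ[(fun x => (c1 - c0) * D x) | mG]) ω = (c1 - c0) * (μ[D | mG]) ω := f3
    rw [g3]
  filter_upwards [hLHS, hRHS] with ω g1 g2
  rw [g1, g2]
  ring

/-- Every balancing score preserves unconfoundedness: if `D ⊥ X | b(X)` and
`(Y^T, Y^C) ⊥ D | X`, then `(Y^T, Y^C) ⊥ D | b(X)`. -/
theorem balancing_score_unconfoundedness
    {Ω : Type*} [MeasurableSpace Ω] [StandardBorelSpace Ω]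
    (μ : Measure Ω) [IsProbabilityMeasure μ]
    {p k : ℕ} (X : Ω → (Fin p → ℝ)) (D YT YC : Ω → ℝ)
    (hX : Measurable X) (hD : Measurable D) (hYT : Measurable YT) (hYC : Measurable YC)
    (hDbin : ∀ ω, D ω = 0 ∨ D ω = 1)
    (b : (Fin p → ℝ) → (Fin k → ℝ)) (hb : Measurable b)
    (hbal : CondIndepFun (MeasurableSpace.comap (b ∘ X) inferInstance)
      ((hb.comp hX).comap_le) D X μ)
    (huncf : CondIndepFun (MeasurableSpace.comap X inferInstance) hX.comap_le
      (fun ω => (YT ω, YC ω)) D μ) :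
    CondIndepFun (MeasurableSpace.comap (b ∘ X) inferInstance)
      ((hb.comp hX).comap_le) (fun ω => (YT ω, YC ω)) D μ := by
  have hY : Measurable (fun ω => (YT ω, YC ω)) := hYT.prodMk hYC
  have hGF : MeasurableSpace.comap (b ∘ X) inferInstance
      ≤ MeasurableSpace.comap X inferInstance := by
    rintro s ⟨u, hu, rfl⟩
    exact ⟨b ⁻¹' u, hb hu, rfl⟩
  rw [condIndepFun_iff_condExp_inter_preimage_eq_mul hY hD]
  apply balancing_key μ hGF hX.comap_le ((hb.comp hX).comap_le) hY hD hDbin ?_ ?_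
  · rintro s ⟨u, hu, rfl⟩
    exact (condIndepFun_iff_condExp_inter_preimage_eq_mul hD hX).mp hbal {1} u
      (measurableSet_singleton 1) hu
  · intro s hs
    exact (condIndepFun_iff_condExp_inter_preimage_eq_mul hY hD).mp huncf s {1}
      hs (measurableSet_singleton 1)
end

section
/- Let Z_n be random convex functions on ℝ^d converging pointwise in probability to a deterministic strictly convex function Z with a unique minimizer z*. Then any sequence of minimizers ẑ_n of Z_n converges in probability to z*. (Convexity lemma / epi-convergence argument used in lasso asymptotics.) -/
open MeasureTheory Filter Topology

lemma mem_convexHull_cross {d : ℕ} (hd : 0 < d) (v : Fin d → ℝ) {R : ℝ} (hR : 0 < R)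
    (x : Fin d → ℝ) (hx : ∑ i, |x i - v i| ≤ R) :
    x ∈ convexHull ℝ (Set.range (fun p : Fin d × Bool =>
      v + Pi.single p.1 (if p.2 then R else -R))) := by
  haveI : Nonempty (Fin d) := ⟨⟨0, hd⟩⟩
  set y : Fin d → ℝ := fun i => x i - v i with hy
  set c : ℝ := (1 - (∑ i, |y i|)/R)/(2*d) with hc
  have hd' : (0:ℝ) < d := by exact_mod_cast hd
  have hc0 : 0 ≤ c := by
    apply div_nonneg _ (by positivity)
    have : (∑ i, |y i|)/R ≤ 1 := by rw [div_le_one hR]; exact hx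
    linarith
  set w : Fin d × Bool → ℝ :=
    fun p => (if p.2 then max (y p.1) 0 else max (-(y p.1)) 0)/R + c with hwdef
  have hw0 : ∀ p ∈ (Finset.univ : Finset (Fin d × Bool)), 0 ≤ w p := by
    intro p _
    have h1 : 0 ≤ (if p.2 then max (y p.1) 0 else max (-(y p.1)) 0) := by
      split <;> exact le_max_right _ _
    have := div_nonneg h1 hR.le
    simp only [hwdef]
    linarith
  have habs : ∀ a : ℝ, max a 0 + max (-a) 0 = |a| := by
    intro a; rcases le_total 0 a with h | h
    · rw [max_eq_left h, max_eq_right (by linarith), abs_of_nonneg h, add_zero]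
    · rw [max_eq_right h, max_eq_left (by linarith), abs_of_nonpos h, zero_add]
  have hmaxsub : ∀ a : ℝ, max a 0 - max (-a) 0 = a := by
    intro a; rcases le_total 0 a with h | h
    · rw [max_eq_left h, max_eq_right (by linarith), sub_zero]
    · rw [max_eq_right h, max_eq_left (by linarith), zero_sub, neg_neg]
  have hsum : ∑ p : Fin d × Bool, w p = 1 := by
    rw [Fintype.sum_prod_type]
    have hb : ∀ i : Fin d, ∑ b : Bool, w (i, b) = |y i|/R + 2*c := by
      intro i
      rw [Fintype.sum_bool]
      simp only [hwdef]
      norm_num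
      rw [← habs (y i)]
      ring
    rw [Finset.sum_congr rfl (fun i _ => hb i), Finset.sum_add_distrib,
      ← Finset.sum_div, Finset.sum_const, Finset.card_univ, Fintype.card_fin,
      nsmul_eq_mul]
    rw [hc]
    field_simp
    ring
  have hx_eq : Finset.univ.centerMass w (fun p : Fin d × Bool =>
      v + Pi.single p.1 (if p.2 then R else -R)) = x := by
    rw [Finset.centerMass_eq_of_sum_1 _ _ hsum]
    have hstep : ∀ p : Fin d × Bool,
        w p • (v + Pi.single p.1 (if p.2 then R else -R)) =
          w p • v + Pi.single p.1 (w p * (if p.2 then R else -R)) := by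
      intro p
      rw [smul_add]
      rw [← Pi.single_smul]
      rfl
    rw [Finset.sum_congr rfl (fun p _ => hstep p), Finset.sum_add_distrib,
      ← Finset.sum_smul, hsum, one_smul]
    rw [Fintype.sum_prod_type]
    have hb : ∀ i : Fin d,
        (∑ b : Bool, Pi.single (M := fun _ => ℝ) i (w (i, b) * (if b then R else -R))) =
          Pi.single (M := fun _ => ℝ) i (y i) := by
      intro i
      rw [Fintype.sum_bool, ← Pi.single_add]
      simp only [hwdef]
      norm_num
      have hRne : R ≠ 0 := hR.ne'
      field_simp
      ring_nf
      rw [hmaxsub]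
    rw [Finset.sum_congr rfl (fun i _ => hb i)]
    have hsingle : (∑ i, Pi.single (M := fun _ => ℝ) i (y i)) = y := by
      funext j
      rw [Finset.sum_apply]
      simp [Pi.single_apply]
    rw [hsingle]
    funext j
    simp [hy]
  rw [← hx_eq]
  exact Finset.centerMass_mem_convexHull _ hw0 (by rw [hsum]; norm_num)
    (fun p _ => Set.mem_range_self p)

/-- Convexity lemma: if random convex functions `Zₙ` converge pointwise in
probability to a deterministic strictly convex function `Z` with unique
minimizer `z*`, then any measurable selections of minimizers of `Zₙ`
converge in probability to `z*`. -/
theorem argmin_of_convex_converges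
    {Ω : Type*} [MeasurableSpace Ω]
    (μ : Measure Ω) [IsProbabilityMeasure μ]
    {d : ℕ}
    (Zn : ℕ → Ω → (Fin d → ℝ) → ℝ)
    (hZconv : ∀ n ω, ConvexOn ℝ Set.univ (Zn n ω))
    (Z : (Fin d → ℝ) → ℝ)
    (hZ : StrictConvexOn ℝ Set.univ Z)
    (zstar : Fin d → ℝ)
    (hzstar : ∀ z, Z zstar ≤ Z z)
    (hzuniq : ∀ z, z ≠ zstar → Z zstar < Z z)
    (hptwise : ∀ (z : Fin d → ℝ), ∀ ε > (0 : ℝ),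
      Tendsto (fun n => μ {ω | ε < |Zn n ω z - Z z|}) atTop (𝓝 0))
    (zhat : ℕ → Ω → (Fin d → ℝ))
    (hzhat_meas : ∀ n, Measurable (zhat n))
    (hzhat_min : ∀ n ω z, Zn n ω (zhat n ω) ≤ Zn n ω z) :
    ∀ ε > (0 : ℝ),
      Tendsto (fun n => μ {ω | ε < dist (zhat n ω) zstar}) atTop (𝓝 0) := by
  classical
  intro ε hε
  rcases Nat.eq_zero_or_pos d with hd | hd
  · -- trivial case `d = 0`
    have hempty : ∀ n, {ω | ε < dist (zhat n ω) zstar} = (∅ : Set Ω) := by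
      intro n
      ext ω
      simp only [Set.mem_setOf_eq, Set.mem_empty_iff_false, iff_false, not_lt]
      have hz : zhat n ω = zstar := by
        subst hd
        exact Subsingleton.elim _ _
      rw [hz, dist_self]
      exact hε.le
    simp only [hempty, measure_empty]
    exact tendsto_const_nhds
  · haveI : Nonempty (Fin d) := ⟨⟨0, hd⟩⟩
    have hd' : (0:ℝ) < d := by exact_mod_cast hd
    have hd1 : (1:ℝ) ≤ d := by exact_mod_cast hd
    have hZcont : Continuous Z := by
      have h := hZ.convexOn.continuousOn isOpen_univ
      exact continuousOn_univ.mp h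
    set S := Metric.sphere zstar ε with hS
    have hSne : S.Nonempty := by
      refine ⟨zstar + Pi.single ⟨0, hd⟩ ε, ?_⟩
      simp only [hS, Metric.mem_sphere, dist_eq_norm, add_sub_cancel_left]
      rw [Pi.norm_single, Real.norm_eq_abs, abs_of_pos hε]
    have hScomp : IsCompact S := isCompact_sphere _ _
    obtain ⟨u₀, hu₀S, hu₀min⟩ := hScomp.exists_isMinOn hSne hZcont.continuousOn
    set δ := Z u₀ - Z zstar with hδdef
    have hδ : 0 < δ := by
      have hne : u₀ ≠ zstar := by
        intro h
        have hd0 : dist u₀ zstar = ε := hu₀S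
        rw [h, dist_self] at hd0
        linarith
      have := hzuniq u₀ hne
      simp only [hδdef]
      linarith
    set η := δ/16 with hηdef
    have hη : 0 < η := by positivity
    set K := Metric.closedBall zstar (ε + 2) with hK
    have hUC := (isCompact_closedBall zstar (ε+2)).uniformContinuousOn_of_continuous
      hZcont.continuousOn
    rw [Metric.uniformContinuousOn_iff] at hUC
    obtain ⟨δuc, hδuc, hUC⟩ := hUC η hη
    set ρ := min (δuc/2) 1 with hρdef
    have hρ : 0 < ρ := lt_min (by linarith) one_pos
    have hρδ : ρ < δuc := lt_of_le_of_lt (min_le_left _ _) (by linarith)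
    have hρ1 : ρ ≤ 1 := min_le_right _ _
    set r := ρ / d with hrdef
    have hr : 0 < r := by positivity
    have hrρ : r ≤ ρ := by
      rw [hrdef, div_le_iff₀ hd']
      nlinarith
    obtain ⟨T, hTS, hTfin, hTcov⟩ := hScomp.finite_cover_balls hr
    set Q : (Fin d → ℝ) → Set (Fin d → ℝ) := fun v => Set.range (fun p : Fin d × Bool =>
        v + Pi.single p.1 (if p.2 then ρ else -ρ)) with hQ
    set Fset : Set (Fin d → ℝ) := {zstar} ∪ T ∪ ⋃ v ∈ T, Q v with hFset
    have hFfin : Fset.Finite := by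
      apply Set.Finite.union (Set.Finite.union (Set.finite_singleton _) hTfin)
      exact hTfin.biUnion (fun v _ => Set.finite_range _)
    set F := hFfin.toFinset with hF
    -- the key deterministic claim
    have key : ∀ n ω, (∀ p ∈ Fset, |Zn n ω p - Z p| ≤ η) → dist (zhat n ω) zstar ≤ ε := by
      intro n ω hev
      by_contra hcon
      push_neg at hcon
      set zh := zhat n ω with hzh
      have hD : 0 < dist zh zstar := lt_trans hε hcon
      have hDnorm : dist zh zstar = ‖zh - zstar‖ := dist_eq_norm _ _
      set t0 := ε / dist zh zstar with ht0
      have ht0pos : 0 < t0 := div_pos hε hD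
      have ht0lt : t0 < 1 := (div_lt_one hD).mpr hcon
      set u := zstar + t0 • (zh - zstar) with hu
      have huS : u ∈ S := by
        have h1 : u - zstar = t0 • (zh - zstar) := by rw [hu]; abel
        have h2 : dist u zstar = ε := by
          rw [dist_eq_norm, h1, norm_smul, Real.norm_eq_abs, abs_of_pos ht0pos, ← hDnorm, ht0,
            div_mul_cancel₀ _ hD.ne']
        exact h2
      have hucomb : u = (1 - t0) • zstar + t0 • zh := by rw [hu]; module
      have hZnu_le : Zn n ω u ≤ Zn n ω zstar := by
        have hcvx := (hZconv n ω).2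
        have hcx := hcvx (Set.mem_univ zstar) (Set.mem_univ zh)
          (a := 1 - t0) (b := t0) (by linarith) ht0pos.le (by ring)
        have hm := hzhat_min n ω zstar
        calc Zn n ω u = Zn n ω ((1 - t0) • zstar + t0 • zh) := by rw [hucomb]
          _ ≤ (1 - t0) * Zn n ω zstar + t0 * Zn n ω zh := hcx
          _ ≤ (1 - t0) * Zn n ω zstar + t0 * Zn n ω zstar := by nlinarith
          _ = Zn n ω zstar := by ring
      obtain ⟨v, hvT, hvball⟩ : ∃ v ∈ T, u ∈ Metric.ball v r := by
        have := hTcov huS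
        simpa using this
      have hvS : dist v zstar = ε := hTS hvT
      have hdistuv : dist u v < r := Metric.mem_ball.mp hvball
      have huK : u ∈ K := by
        simp only [hK, Metric.mem_closedBall]
        have : dist u zstar = ε := huS
        rw [this]; linarith
      have hvK : v ∈ K := by
        simp only [hK, Metric.mem_closedBall, hvS]
        linarith
      have hZuv : |Z v - Z u| ≤ η := by
        have hd2 : dist v u < δuc := by
          rw [dist_comm]
          exact lt_of_lt_of_le hdistuv (hrρ.trans hρδ.le)
        have := hUC v hvK u huK hd2
        rw [Real.dist_eq] at this
        exact this.le
      set w := v + (v - u) with hw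
      have hwsum : ∑ i, |w i - v i| ≤ ρ := by
        have hle : ∀ i, |w i - v i| ≤ r := by
          intro i
          have h1 : w i - v i = v i - u i := by
            simp only [hw, Pi.add_apply, Pi.sub_apply]
            ring
          rw [h1]
          have h2 := dist_le_pi_dist v u i
          rw [Real.dist_eq] at h2
          have h3 : dist v u < r := by rw [dist_comm]; exact hdistuv
          exact h2.trans h3.le
        calc ∑ i, |w i - v i| ≤ ∑ _i : Fin d, r := Finset.sum_le_sum (fun i _ => hle i)
          _ = d * r := by rw [Finset.sum_const, Finset.card_univ, Fintype.card_fin, nsmul_eq_mul]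
          _ = ρ := by rw [hrdef]; field_simp
      have hwhull := mem_convexHull_cross hd v hρ w hwsum
      obtain ⟨p, hpQ, hZnwp⟩ := (hZconv n ω).exists_ge_of_mem_convexHull (Set.subset_univ _) hwhull
      obtain ⟨q, hq⟩ := hpQ
      have hpv : dist p v = ρ := by
        rw [← hq, dist_eq_norm, add_sub_cancel_left, Pi.norm_single, Real.norm_eq_abs]
        split
        · exact abs_of_pos hρ
        · rw [abs_neg]; exact abs_of_pos hρ
      have hpK : p ∈ K := by
        simp only [hK, Metric.mem_closedBall]
        calc dist p zstar ≤ dist p v + dist v zstar := dist_triangle _ _ _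
          _ = ρ + ε := by rw [hpv, hvS]
          _ ≤ ε + 2 := by linarith
      have hZpv : |Z p - Z v| ≤ η := by
        have := hUC p hpK v hvK (by rw [hpv]; exact hρδ)
        rw [Real.dist_eq] at this
        exact this.le
      have hzstarF : zstar ∈ Fset := Set.mem_union_left _ (Set.mem_union_left _ rfl)
      have hvF : v ∈ Fset := Set.mem_union_left _ (Set.mem_union_right _ hvT)
      have hpF : p ∈ Fset := by
        refine Set.mem_union_right _ (Set.mem_biUnion hvT ?_)
        exact ⟨q, hq⟩
      have hEz := abs_le.mp (hev zstar hzstarF)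
      have hEv := abs_le.mp (hev v hvF)
      have hEp := abs_le.mp (hev p hpF)
      have hmid : v = (1/2 : ℝ) • u + (1/2 : ℝ) • w := by rw [hw]; module
      have hZnv_le : Zn n ω v ≤ (1/2) * Zn n ω u + (1/2) * Zn n ω w := by
        have hcvx := (hZconv n ω).2
        have hcx := hcvx (Set.mem_univ u) (Set.mem_univ w)
          (a := 1/2) (b := 1/2) (by norm_num) (by norm_num) (by norm_num)
        rw [hmid]
        exact hcx
      have hZu_ge : Z zstar + δ ≤ Z u := by
        have hmin := (isMinOn_iff.mp hu₀min) u huS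
        simp only [hδdef]
        linarith
      have habs1 := abs_le.mp hZuv
      have habs2 := abs_le.mp hZpv
      have hδη : δ = 16 * η := by rw [hηdef]; ring
      linarith [hZnu_le, hZnv_le, hZnwp, hEz.2, hEv.1, hEp.2, habs1.1, habs1.2,
        habs2.2, hZu_ge, hη]
    -- conclude by a union bound
    have hsub : ∀ n, {ω | ε < dist (zhat n ω) zstar} ⊆
        ⋃ p ∈ F, {ω | η < |Zn n ω p - Z p|} := by
      intro n ω hω
      simp only [Set.mem_setOf_eq] at hω
      by_contra hc
      simp only [Set.mem_iUnion, Set.mem_setOf_eq, not_exists, not_lt] at hc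
      have hall : ∀ p ∈ Fset, |Zn n ω p - Z p| ≤ η :=
        fun p hp => hc p (hFfin.mem_toFinset.mpr hp)
      exact absurd (key n ω hall) (not_le.mpr hω)
    have hbound : ∀ n, μ {ω | ε < dist (zhat n ω) zstar} ≤
        ∑ p ∈ F, μ {ω | η < |Zn n ω p - Z p|} :=
      fun n => (measure_mono (hsub n)).trans (measure_biUnion_finset_le _ _)
    have hzero : Tendsto (fun n => ∑ p ∈ F, μ {ω | η < |Zn n ω p - Z p|}) atTop (𝓝 0) := by
      have h := tendsto_finset_sum F (fun p (_ : p ∈ F) => hptwise p η hη)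
      simpa using h
    exact tendsto_of_tendsto_of_tendsto_of_le_of_le tendsto_const_nhds hzero
      (fun n => zero_le) hbound
end
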